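/- For every k ≥ 3, the sequence (S(n+k-1, k))_{n≥1} of Stirling numbers of the second kind is not realizable, but the sequence ((k-1)!·S(n+k-1, k))_{n≥1} is realizable. -/

import Mathlib

/-- A sequence `a : ℕ → ℕ` (indexed from 1) is realizable if there is a set `X`
and a map `T : X → X` such that for every `n ≥ 1` the set of points fixed by the
`n`-th iterate of `T` is finite with cardinality `a n`. -/
def IsRealizable (a : ℕ → ℕ) : Prop :=
  ∃ (X : Type) (T : X → X), ∀ n : ℕ, 1 ≤ n →
    {x : X | T^[n] x = x}.Finite ∧ {x : X | T^[n] x = x}.ncard = a n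

/-- The Möbius-transformed sum `∑_{d ∣ n} μ(n/d) a_d`. -/
def doldSum (a : ℕ → ℕ) (n : ℕ) : ℤ :=
  ∑ d ∈ n.divisors, (ArithmeticFunction.moebius (n / d) : ℤ) * (a d : ℤ)

/-- Stirling numbers of the second kind: `stirling2 n k` is the number of
partitions of an `n`-element set into `k` non-empty blocks. -/
def stirling2 : ℕ → ℕ → ℕ
  | 0, 0 => 1
  | 0, _ + 1 => 0
  | _ + 1, 0 => 0
  | n + 1, k + 1 => (k + 1) * stirling2 n (k + 1) + stirling2 n k

lemma st_zero_left (k : ℕ) : stirling2 0 (k+1) = 0 := rfl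

lemma st_zero_zero : stirling2 0 0 = 1 := rfl

lemma st_zero_right (n : ℕ) : stirling2 (n+1) 0 = 0 := rfl

lemma st_rec (n k : ℕ) : stirling2 (n+1) (k+1) = (k+1) * stirling2 n (k+1) + stirling2 n k := rfl

lemma st_eq_zero : ∀ {n k : ℕ}, n < k → stirling2 n k = 0 := by
  intro n
  induction n with
  | zero => intro k h; cases k with
    | zero => omega
    | succ m => rfl
  | succ n ih =>
    intro k h
    cases k with
    | zero => omega
    | succ m => rw [st_rec, ih (by omega), ih (by omega)]; simp

lemma st_self (n : ℕ) : stirling2 n n = 1 := by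
  induction n with
  | zero => rfl
  | succ n ih => rw [st_rec, ih, st_eq_zero (by omega)]; simp

lemma st_one (n : ℕ) : stirling2 (n+1) 1 = 1 := by
  induction n with
  | zero => rfl
  | succ n ih => rw [st_rec, ih, st_zero_right]

lemma st_pos {n k : ℕ} (h1 : 1 ≤ k) (h : k ≤ n) : 0 < stirling2 n k := by
  induction n generalizing k with
  | zero => omega
  | succ n ih =>
    cases k with
    | zero => omega
    | succ m =>
      rcases Nat.lt_or_ge m n with h'|h'
      · rcases Nat.eq_zero_or_pos m with rfl|hm
        · rw [st_one]; norm_num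
        · rw [st_rec]
          have := ih (k := m+1) (by omega) (by omega)
          positivity
      · have : m = n := by omega
        subst this; rw [st_self]; norm_num

lemma alt_sum (k : ℕ) :
    ∑ j ∈ Finset.range (k+1), (-1:ℤ)^(k+j) * (k.choose j) = if k = 0 then 1 else 0 := by
  have h := Int.alternating_sum_range_choose (n := k)
  calc ∑ j ∈ Finset.range (k+1), (-1:ℤ)^(k+j) * (k.choose j)
      = (-1:ℤ)^k * ∑ j ∈ Finset.range (k+1), (-1:ℤ)^j * (k.choose j) := by
        rw [Finset.mul_sum]; apply Finset.sum_congr rfl; intro j _; rw [pow_add]; ring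
    _ = if k = 0 then 1 else 0 := by rw [h]; cases k <;> simp

lemma choose_absorb (c j : ℕ) : (c+1-j) * ((c+1).choose j) = (c+1) * (c.choose j) := by
  rcases Nat.lt_or_ge c j with h|h
  · rcases Nat.eq_or_lt_of_le h with rfl|h'
    · simp
    · rw [Nat.choose_eq_zero_of_lt h', Nat.choose_eq_zero_of_lt (by omega)]; ring
  · have h1 : (c+1).choose j = (c+1).choose (c+1-j) := (Nat.choose_symm (by omega)).symm
    have h2 : c + 1 - j = (c - j) + 1 := by omega
    rw [h1, h2, mul_comm, ← Nat.add_one_mul_choose_eq, Nat.choose_symm h]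

/-- key identity -/
lemma st_ident (m k : ℕ) :
    (Nat.factorial k : ℤ) * stirling2 (m+1) (k+1) =
      ∑ j ∈ Finset.range (k+1), (-1:ℤ)^(k+j) * (k.choose j) * ((j:ℤ)+1)^m := by
  induction m generalizing k with
  | zero =>
    simp only [pow_zero, mul_one]
    rw [alt_sum]
    cases k with
    | zero => simp [stirling2, Nat.factorial]
    | succ c => rw [st_eq_zero (by omega)]; simp
  | succ m ih =>
    cases k with
    | zero => show (1:ℤ) * (stirling2 (m+2) 1 : ℤ) = _; rw [st_one]; simp
    | succ c =>
      have key : ∀ j : ℕ, j ∈ Finset.range (c+2) →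
          (-1:ℤ)^(c+1+j) * ((c+1).choose j) * ((j:ℤ)+1)^(m+1)
          = (c+2) * ((-1:ℤ)^(c+1+j) * ((c+1).choose j) * ((j:ℤ)+1)^m)
            - (c+1) * ((-1:ℤ)^(c+1+j) * (c.choose j) * ((j:ℤ)+1)^m) := by
        intro j hj
        have hj2 : j < c + 2 := Finset.mem_range.mp hj
        have habs : ((c+1-j : ℕ) : ℤ) * (((c+1).choose j : ℕ) : ℤ)
            = ((c+1 : ℕ) : ℤ) * ((c.choose j : ℕ) : ℤ) := by
          exact_mod_cast congrArg (fun t : ℕ => (t : ℤ)) (choose_absorb c j)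
        have hsub : ((c+1-j : ℕ) : ℤ) = ((c:ℤ)+1) - j := by
          have : j ≤ c + 1 := by omega
          push_cast [this]; ring
        rw [hsub] at habs
        have hj1 : ((j:ℤ)+1) * ((c+1).choose j) = ((c:ℤ)+2) * ((c+1).choose j) - ((c:ℤ)+1) * (c.choose j) := by
          push_cast at habs ⊢
          linear_combination -habs
        calc (-1:ℤ)^(c+1+j) * ((c+1).choose j) * ((j:ℤ)+1)^(m+1)
            = (-1:ℤ)^(c+1+j) * (((j:ℤ)+1) * ((c+1).choose j)) * ((j:ℤ)+1)^m := by ring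
          _ = _ := by rw [hj1]; ring
      rw [Finset.sum_congr rfl key, Finset.sum_sub_distrib, ← Finset.mul_sum, ← Finset.mul_sum]
      have htop : ∑ j ∈ Finset.range (c+2), (-1:ℤ)^(c+1+j) * (c.choose j) * ((j:ℤ)+1)^m
          = - ∑ j ∈ Finset.range (c+1), (-1:ℤ)^(c+j) * (c.choose j) * ((j:ℤ)+1)^m := by
        rw [Finset.sum_range_succ, Nat.choose_eq_zero_of_lt (Nat.lt_succ_self c)]
        push_cast
        rw [mul_zero, zero_mul, add_zero, ← Finset.sum_neg_distrib]
        apply Finset.sum_congr rfl; intro j _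
        rw [show c+1+j = (c+j)+1 by omega, pow_succ]; ring
      rw [htop, ← ih (c+1), ← ih c]
      rw [show stirling2 (m+1+1) (c+1+1) = (c+2) * stirling2 (m+1) (c+2) + stirling2 (m+1) (c+1) from st_rec (m+1) (c+1)]
      push_cast [Nat.factorial_succ]
      ring

section congr
variable {p : ℕ} [hp : Fact p.Prime]

lemma st_p_mod (k : ℕ) :
    (stirling2 p k : ZMod p) = (if k = 1 then 1 else 0) + (if k = p then 1 else 0) := by
  have hp2 : 2 ≤ p := hp.out.two_le
  rcases Nat.lt_trichotomy k p with h | h | h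
  · -- k < p
    rcases Nat.eq_zero_or_pos k with rfl | hk1
    · obtain ⟨p', rfl⟩ : ∃ p', p = p' + 1 := ⟨p - 1, by omega⟩
      rw [st_zero_right]
      simp [Nat.succ_ne_zero]
    · obtain ⟨c, rfl⟩ : ∃ c, k = c + 1 := ⟨k - 1, by omega⟩
      have hfac : ((c.factorial : ZMod p)) ≠ 0 := by
        rw [Ne, ZMod.natCast_eq_zero_iff]
        exact fun hdvd => absurd ((Nat.Prime.dvd_factorial hp.out).mp hdvd) (by omega)
      apply mul_left_cancel₀ hfac
      obtain ⟨q, hq⟩ : ∃ q, p = q + 1 := ⟨p - 1, by omega⟩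
      have hid := st_ident q c
      rw [← hq] at hid
      have hcast := congrArg (fun z : ℤ => (z : ZMod p)) hid
      simp only [Int.cast_mul, Int.cast_natCast, Int.cast_sum, Int.cast_pow, Int.cast_add,
        Int.cast_neg, Int.cast_one] at hcast
      rw [hcast]
      have hone : ∀ j ∈ Finset.range (c+1), (-1:ZMod p)^(c+j) * (c.choose j) * ((j:ZMod p)+1)^q
          = (-1:ZMod p)^(c+j) * (c.choose j) := by
        intro j hj
        have hjc : j < c + 1 := Finset.mem_range.mp hj
        have hne : ((j:ZMod p)+1) ≠ 0 := by
          have h0 : (((j+1 : ℕ)) : ZMod p) ≠ 0 := by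
            rw [Ne, ZMod.natCast_eq_zero_iff]
            intro hdvd
            have := Nat.le_of_dvd (by omega) hdvd
            omega
          simpa using h0
        have h1 : ((j:ZMod p)+1)^q = 1 := by
          have := ZMod.pow_card_sub_one_eq_one hne
          rwa [show p - 1 = q by omega] at this
        rw [h1, mul_one]
      rw [Finset.sum_congr rfl hone]
      have halt := congrArg (fun z : ℤ => (z : ZMod p)) (alt_sum c)
      simp only [Int.cast_sum, Int.cast_mul, Int.cast_pow, Int.cast_neg, Int.cast_one,
        Int.cast_natCast] at halt
      rw [halt]
      have hk_ne : c + 1 ≠ p := by omega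
      rcases Nat.eq_zero_or_pos c with rfl | hc
      · simp [show (1:ℕ) ≠ p by omega]
      · simp [show c + 1 ≠ 1 by omega, hk_ne, show c ≠ 0 by omega]
  · -- k = p
    subst h
    rw [st_self]
    simp [show k ≠ 1 by omega]
  · -- p < k
    rw [st_eq_zero h]
    simp [show k ≠ 1 by omega, show k ≠ p by omega]

lemma st_congr (n k : ℕ) :
    (stirling2 (n+p) k : ZMod p)
      = (stirling2 (n+1) k : ZMod p) + (if p ≤ k then (stirling2 n (k-p) : ZMod p) else 0) := by
  have hp2 : 2 ≤ p := hp.out.two_le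
  induction n generalizing k with
  | zero =>
    rw [zero_add, st_p_mod]
    congr 1
    · rcases k with _ | c
      · obtain ⟨p', rfl⟩ : ∃ p', p = p' + 1 := ⟨p - 1, by omega⟩
        simp [st_zero_right]
      · rcases Nat.eq_zero_or_pos c with rfl | hc
        · simp [st_one 0]
        · rw [st_eq_zero (by omega)]
          simp [show c + 1 ≠ 1 by omega, show c ≠ 0 by omega]
    · by_cases hkp : k = p
      · subst hkp
        simp [st_zero_zero]
      · rw [if_neg hkp]
        by_cases hle : p ≤ k
        · rw [if_pos hle]
          obtain ⟨c, hc⟩ : ∃ c, k - p = c + 1 := ⟨k - p - 1, by omega⟩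
          rw [hc, st_zero_left]
          simp
        · rw [if_neg hle]
  | succ n ih =>
    rcases k with _ | c
    · obtain ⟨q, hq⟩ : ∃ q, n + 1 + p = q + 1 := ⟨n + p, by omega⟩
      rw [hq, st_zero_right, st_zero_right]
      simp [show ¬ p ≤ 0 by omega]
    · have hrec1 : stirling2 (n+1+p) (c+1) = (c+1) * stirling2 (n+p) (c+1) + stirling2 (n+p) c := by
        rw [show n+1+p = (n+p)+1 by omega]; exact st_rec (n+p) c
      rw [hrec1]
      push_cast
      rw [ih (c+1), ih c, st_rec (n+1) c]
      push_cast
      rcases Nat.lt_or_ge (c+1) p with hlt | hge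
      · rw [if_neg (show ¬ p ≤ c+1 by omega), if_neg (show ¬ p ≤ c+1 by omega),
            if_neg (show ¬ p ≤ c by omega)]
        ring
      · rcases Nat.eq_or_lt_of_le hge with hpe | hgt
        · -- p = c+1
          rw [if_neg (show ¬ p ≤ c by omega), if_pos (show p ≤ c+1 by omega),
              if_pos (show p ≤ c+1 by omega), show c+1-p = 0 by omega, st_zero_right n]
          have hcp : ((c:ZMod p) + 1) = 0 := by
            have h0 : ((c+1 : ℕ) : ZMod p) = 0 := by rw [← hpe]; exact ZMod.natCast_self p
            push_cast at h0; exact h0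
          rcases n with _ | n'
          · rw [st_zero_zero, hcp]; push_cast; ring
          · rw [st_zero_right n']; push_cast; ring
        · -- p ≤ c
          have h1 : p ≤ c := by omega
          rw [if_pos (show p ≤ c+1 by omega), if_pos (show p ≤ c+1 by omega), if_pos h1]
          have hsub : c + 1 - p = (c - p) + 1 := by omega
          rw [hsub, st_rec n (c-p)]
          push_cast
          have hcast : ((c:ZMod p)) = ((c - p : ℕ) : ZMod p) := by
            conv_lhs => rw [show c = (c - p) + p by omega]
            push_cast
            simp [ZMod.natCast_self]
          rw [hcast]
          ring

lemma st_two_mod {k : ℕ} (hp1 : p < k) (hp2 : k < 2*p) :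
    (stirling2 (p+k-1) k : ZMod p) = 2 := by
  have h1 : p + k - 1 = (k-1) + p := by omega
  rw [h1, st_congr (k-1) k, if_pos (show p ≤ k by omega),
      show k - 1 + 1 = k by omega, st_self]
  have h2 : k - 1 = (k - p - 1) + p := by omega
  rw [h2, st_congr (k-p-1) (k-p), if_neg (show ¬ p ≤ k - p by omega),
      show k - p - 1 + 1 = k - p by omega, st_self]
  push_cast
  ring
end congr

open Function Finset

/-- a finite set on which every point has exact period n, closed under T, has card divisible by n -/
lemma card_exact_period_dvd {X : Type} (T : X → X) (n : ℕ) (hn : 0 < n) :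
    ∀ t : Finset X, (∀ x ∈ t, minimalPeriod T x = n) → (∀ x ∈ t, T x ∈ t) → n ∣ t.card := by
  classical
  intro t
  induction t using Finset.strongInduction with
  | _ t IH =>
    intro hmp hcl
    rcases t.eq_empty_or_nonempty with rfl | ⟨x, hx⟩
    · simp
    · have hper : IsPeriodicPt T n x := by
        rw [← hmp x hx]; exact isPeriodicPt_minimalPeriod T x
      have hit : ∀ i, T^[i] x ∈ t := by
        intro i
        induction i with
        | zero => exact hx
        | succ i ih => rw [Function.iterate_succ_apply']; exact hcl _ ih
      set O : Finset X := (Finset.range n).image (fun i => T^[i] x) with hO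
      have hinj : Set.InjOn (fun i => T^[i] x) (Finset.range n) := by
        have haux : ∀ i j, i < j → j < n → T^[i] x = T^[j] x → False := by
          intro i j hlt hj hij
          have h1 : T^[n - j + i] x = x := by
            have h0 : T^[n - j] (T^[j] x) = x := by
              rw [← Function.iterate_add_apply, show n - j + j = n by omega]; exact hper
            rw [← hij] at h0
            rw [Function.iterate_add_apply]
            exact h0
          have h2 : IsPeriodicPt T (n - j + i) x := h1
          have h3 := h2.minimalPeriod_le (by omega)
          rw [hmp x hx] at h3
          omega
        intro i hi j hj hij
        simp only [Finset.coe_range, Set.mem_Iio] at hi hj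
        have hij' : T^[i] x = T^[j] x := hij
        rcases Nat.lt_trichotomy i j with h | h | h
        · exact absurd (haux i j h hj hij') (fun h => h)
        · exact h
        · exact absurd (haux j i h hi hij'.symm) (fun h => h)
      have hOcard : O.card = n := by
        rw [hO, Finset.card_image_of_injOn hinj, Finset.card_range]
      have hOsub : O ⊆ t := by
        intro y hy
        simp only [hO, Finset.mem_image, Finset.mem_range] at hy
        obtain ⟨i, _, rfl⟩ := hy
        exact hit i
      have hmem : ∀ i : ℕ, T^[i] x ∈ O := by
        intro i
        simp only [hO, Finset.mem_image, Finset.mem_range]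
        exact ⟨i % n, Nat.mod_lt _ hn, hper.iterate_mod_apply i⟩
      have hback : ∀ y ∈ t, T y ∈ O → y ∈ O := by
        intro y hy hTy
        simp only [hO, Finset.mem_image, Finset.mem_range] at hTy
        obtain ⟨i, hi, hiy⟩ := hTy
        have hpy : IsPeriodicPt T n y := by
          rw [← hmp y hy]; exact isPeriodicPt_minimalPeriod T y
        have h7 : y = T^[n-1+i] x := by
          have h4 : T^[n-1] (T y) = y := by
            have h5 : T^[(n-1)+1] y = y := by rw [show n-1+1 = n by omega]; exact hpy
            rwa [Function.iterate_succ_apply] at h5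
          rw [← h4, ← hiy, ← Function.iterate_add_apply]
        rw [h7]; exact hmem _
      have hsub : t \ O ⊂ t := by
        apply Finset.sdiff_ssubset ?_ ?_
        · exact hOsub
        · exact ⟨x, by simpa [hO] using ⟨0, hn, rfl⟩⟩
      have hdvd : n ∣ (t \ O).card := by
        apply IH _ hsub
        · intro y hy; exact hmp y (Finset.mem_sdiff.mp hy).1
        · intro y hy
          obtain ⟨hyt, hyO⟩ := Finset.mem_sdiff.mp hy
          refine Finset.mem_sdiff.mpr ⟨hcl y hyt, fun hTy => hyO ?_⟩
          exact hback y hyt hTy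
      have hcard : t.card = n + (t \ O).card := by
        have h5 := Finset.card_sdiff_of_subset hOsub
        have h6 := Finset.card_le_card hOsub
        omega
      rw [hcard]
      exact Nat.dvd_add (dvd_refl n) hdvd

theorem dold_of_realizable {a : ℕ → ℕ} (h : IsRealizable a) {n : ℕ} (hn : 1 ≤ n) :
    (n:ℤ) ∣ doldSum a n ∧ 0 ≤ doldSum a n := by
  classical
  obtain ⟨X, T, hT⟩ := h
  set Fn : Finset X := (hT n hn).1.toFinset with hFn
  set N : ℕ → ℕ := fun e => (Fn.filter (fun x => minimalPeriod T x = e)).card with hN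
  have hsum : ∀ d > 0, d ∈ {m | m ∣ n} → ∑ e ∈ d.divisors, (N e : ℤ) = ((a d : ℕ) : ℤ) := by
    intro d hd hdn
    simp only [Set.mem_setOf_eq] at hdn
    have hfin := (hT d hd).1
    have hcard := (hT d hd).2
    set Fd : Finset X := hfin.toFinset with hFd
    have hcard' : Fd.card = a d := by
      rw [← hcard, Set.ncard_eq_toFinset_card _ hfin]
    have hfib : Fd.card = ∑ e ∈ d.divisors, (Fd.filter (fun x => minimalPeriod T x = e)).card := by
      apply Finset.card_eq_sum_card_fiberwise
      intro x hx
      rw [hFd, Finset.mem_coe, Set.Finite.mem_toFinset] at hx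
      rw [Finset.mem_coe, Nat.mem_divisors]
      exact ⟨IsPeriodicPt.minimalPeriod_dvd hx, by omega⟩
    have hfe : ∀ e ∈ d.divisors, Fd.filter (fun x => minimalPeriod T x = e)
        = Fn.filter (fun x => minimalPeriod T x = e) := by
      intro e he
      rw [Nat.mem_divisors] at he
      ext x
      simp only [Finset.mem_filter, hFd, hFn, Set.Finite.mem_toFinset, Set.mem_setOf_eq]
      constructor
      · rintro ⟨hxd, hmp⟩
        refine ⟨?_, hmp⟩
        exact isPeriodicPt_iff_minimalPeriod_dvd.mpr (hmp ▸ (he.1.trans hdn))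
      · rintro ⟨hxn, hmp⟩
        refine ⟨?_, hmp⟩
        exact isPeriodicPt_iff_minimalPeriod_dvd.mpr (hmp ▸ he.1)
    rw [← hcard', hfib]
    push_cast
    apply Finset.sum_congr rfl
    intro e he
    rw [hfe e he, hN]
  have hinv := (ArithmeticFunction.sum_eq_iff_sum_mul_moebius_eq_on (R := ℤ)
      (f := fun e => (N e : ℤ)) (g := fun d => ((a d : ℕ) : ℤ)) {m | m ∣ n}
      (fun m m' hmm' hm' => dvd_trans hmm' hm')).mp hsum n (by omega) (dvd_refl n)
  simp only [Int.cast_id] at hinv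
  have hds : doldSum a n = (N n : ℤ) := by
    rw [← hinv, doldSum,
      Nat.sum_divisorsAntidiagonal' (f := fun x y => (ArithmeticFunction.moebius x) * ((a y : ℕ) : ℤ))]
  have hdvd : n ∣ N n := by
    apply card_exact_period_dvd T n (by omega)
    · intro x hx; exact (Finset.mem_filter.mp hx).2
    · intro x hx
      obtain ⟨hx1, hx2⟩ := Finset.mem_filter.mp hx
      rw [hFn, Set.Finite.mem_toFinset, Set.mem_setOf_eq] at hx1
      apply Finset.mem_filter.mpr
      constructor
      · rw [hFn, Set.Finite.mem_toFinset, Set.mem_setOf_eq]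
        calc T^[n] (T x) = T^[n+1] x := (Function.iterate_succ_apply T n x).symm
          _ = T (T^[n] x) := Function.iterate_succ_apply' T n x
          _ = T x := by rw [hx1]
      · rw [minimalPeriod_apply (mk_mem_periodicPts (by omega) hx1)]
        exact hx2
  rw [hds]
  exact ⟨Int.natCast_dvd_natCast.mpr hdvd, Int.natCast_nonneg _⟩

section shift
variable (j : ℕ)

def shiftT : (ℕ → Fin (j+1)) → (ℕ → Fin (j+1)) := fun g m => g (m+1)

lemma shiftT_iterate (t : ℕ) (f : ℕ → Fin (j+1)) :
    (shiftT j)^[t] f = fun m => f (m + t) := by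
  induction t generalizing f with
  | zero => rfl
  | succ t ih =>
    rw [Function.iterate_succ_apply]
    have h0 : shiftT j f = fun m => f (m+1) := rfl
    rw [h0, ih]
    funext m
    congr 1

lemma pow_realizable : IsRealizable (fun n => (j+1) ^ n) := by
  classical
  refine ⟨ℕ → Fin (j+1), shiftT j, ?_⟩
  intro n hn
  set S : Set (ℕ → Fin (j+1)) := {f | (shiftT j)^[n] f = f} with hS
  have hmem : ∀ f, f ∈ S ↔ ∀ m, f (m + n) = f m := by
    intro f
    rw [hS, Set.mem_setOf_eq, shiftT_iterate]
    constructor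
    · intro h m; exact congrFun h m
    · intro h; funext m; exact h m
  have haux : ∀ f : ℕ → Fin (j+1), (∀ m, f (m + n) = f m) → ∀ m, f (m % n) = f m := by
    intro f hf m
    induction m using Nat.strong_induction_on with
    | _ m IH =>
      rcases Nat.lt_or_ge m n with h | h
      · rw [Nat.mod_eq_of_lt h]
      · have hm : m = (m - n) + n := by omega
        rw [hm, Nat.add_mod_right, hf (m-n)]
        exact IH (m-n) (by omega)
  have e : ↥S ≃ (Fin n → Fin (j+1)) := by
    refine ⟨fun g i => g.1 i.1, fun h => ⟨fun m => h ⟨m % n, Nat.mod_lt _ (by omega)⟩, ?_⟩, ?_, ?_⟩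
    · rw [show ((fun m => h ⟨m % n, Nat.mod_lt _ (by omega)⟩ : ℕ → Fin (j+1)) ∈ S) ↔ _ from hmem _]
      intro m
      congr 1
      exact Fin.ext (by simp [Nat.add_mod_right])
    · intro g
      apply Subtype.ext
      funext m
      exact haux g.1 ((hmem g.1).mp g.2) m
    · intro h
      funext i
      show h ⟨i.1 % n, Nat.mod_lt _ (by omega)⟩ = h i
      congr 1
      exact Fin.ext (Nat.mod_eq_of_lt i.2)
  haveI : Finite ↥S := Finite.of_equiv _ e.symm
  refine ⟨Set.toFinite S, ?_⟩
  rw [← Nat.card_coe_set_eq, Nat.card_congr e]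
  simp [Nat.card_eq_fintype_card]

lemma gauss_dvd (n : ℕ) (hn : 1 ≤ n) :
    (n:ℤ) ∣ ∑ d ∈ n.divisors, (ArithmeticFunction.moebius (n / d) : ℤ) * ((j:ℤ)+1)^d := by
  have h := (dold_of_realizable (pow_realizable j) hn).1
  rw [doldSum] at h
  convert h using 2 with d hd
  push_cast
  ring
end shift

theorem realizable_of_dold {a : ℕ → ℕ}
    (h : ∀ n : ℕ, 1 ≤ n → (n:ℤ) ∣ doldSum a n ∧ 0 ≤ doldSum a n) :
    IsRealizable a := by
  classical
  set c : ℕ → ℕ := fun m => (doldSum a m).toNat / m with hc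
  have hkey : ∀ m : ℕ, 1 ≤ m → ((c m * m : ℕ) : ℤ) = doldSum a m := by
    intro m hm
    obtain ⟨hdvd, hpos⟩ := h m hm
    have h1 : m ∣ (doldSum a m).toNat := by
      rcases hdvd with ⟨e, he⟩
      have he' : 0 ≤ e := by nlinarith [he ▸ hpos]
      refine ⟨e.toNat, ?_⟩
      have : ((doldSum a m).toNat : ℤ) = ((m * e.toNat : ℕ) : ℤ) := by
        rw [Int.toNat_of_nonneg hpos, he]
        push_cast
        rw [Int.toNat_of_nonneg he']
      exact_mod_cast this
    rw [hc]
    push_cast [Nat.div_mul_cancel h1]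
    rw [Int.toNat_of_nonneg hpos]
  -- Möbius inversion: ∑_{d ∣ n} doldSum a d = a n
  have hinv : ∀ n : ℕ, 1 ≤ n → ∑ d ∈ n.divisors, doldSum a d = (a n : ℤ) := by
    have := (ArithmeticFunction.sum_eq_iff_sum_mul_moebius_eq (R := ℤ)
      (f := fun d => doldSum a d) (g := fun n => ((a n : ℕ) : ℤ))).mpr
    intro n hn
    refine this ?_ n (by omega)
    intro m hm
    simp only [Int.cast_id]
    rw [Nat.sum_divisorsAntidiagonal' (f := fun x y => (ArithmeticFunction.moebius x) * ((a y : ℕ) : ℤ))]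
    rfl
  have hsum : ∀ n : ℕ, 1 ≤ n → ∑ d ∈ n.divisors, c d * d = a n := by
    intro n hn
    have : ((∑ d ∈ n.divisors, c d * d : ℕ) : ℤ) = ((a n : ℕ) : ℤ) := by
      push_cast
      rw [← hinv n hn]
      apply Finset.sum_congr rfl
      intro d hd
      have hd1 : 1 ≤ d := Nat.pos_of_mem_divisors hd
      exact_mod_cast hkey d hd1
    exact_mod_cast this
  -- the dynamical system: disjoint cycles
  refine ⟨ℕ × ℕ × ℕ, fun q => if q.2.1 < c (q.1+1) then (q.1, q.2.1, (q.2.2+1) % (q.1+1))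
    else (q.1, q.2.1, q.2.2+1), ?_⟩
  intro n hn
  set T : ℕ × ℕ × ℕ → ℕ × ℕ × ℕ := fun q => if q.2.1 < c (q.1+1) then (q.1, q.2.1, (q.2.2+1) % (q.1+1))
    else (q.1, q.2.1, q.2.2+1) with hT
  have hT1 : ∀ m i z, i < c (m+1) → T (m,i,z) = (m, i, (z+1) % (m+1)) := by
    intro m i z hi; simp [hT, hi]
  have hT2 : ∀ m i z, ¬ i < c (m+1) → T (m,i,z) = (m, i, z+1) := by
    intro m i z hi; simp [hT, hi]
  have hiter1 : ∀ m i z, i < c (m+1) → z < m+1 → ∀ t, T^[t] (m,i,z) = (m, i, (z+t) % (m+1)) := by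
    intro m i z hi hz t
    induction t with
    | zero => simp [Nat.mod_eq_of_lt hz]
    | succ t ih =>
      rw [Function.iterate_succ_apply', ih, hT1 m i _ hi, Nat.mod_add_mod]
      congr 2
  have hiter2 : ∀ m i z t, ¬ i < c (m+1) → T^[t] (m,i,z) = (m, i, z+t) := by
    intro m i z t hi
    induction t with
    | zero => rfl
    | succ t ih =>
      rw [Function.iterate_succ_apply', ih, hT2 m i _ hi]
      congr 2
  set F : Finset (ℕ × ℕ × ℕ) := n.divisors.biUnion
      (fun d => {d-1} ×ˢ ((Finset.range (c d)) ×ˢ (Finset.range d))) with hF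
  have hset : {x : ℕ × ℕ × ℕ | T^[n] x = x} = ↑F := by
    ext ⟨m, i, z⟩
    simp only [Set.mem_setOf_eq, Finset.coe_biUnion, Set.mem_iUnion, Finset.mem_coe,
      Finset.mem_biUnion, hF, Finset.mem_product, Finset.mem_singleton, Finset.mem_range,
      Nat.mem_divisors]
    constructor
    · intro hfix
      by_cases hi : i < c (m+1)
      · by_cases hz : z < m+1
        · rw [hiter1 m i z hi hz n] at hfix
          have hzz : (z + n) % (m+1) = z := by
            have := congrArg (fun q : ℕ × ℕ × ℕ => q.2.2) hfix
            simpa using this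
          have hdvd : (m+1) ∣ n := by
            have h1 : (z + n) % (m+1) = z % (m+1) := by rw [hzz, Nat.mod_eq_of_lt hz]
            have h2 : (m+1) ∣ (z + n) - z := (Nat.modEq_iff_dvd' (by omega)).mp h1.symm
            simpa using h2
          exact ⟨m+1, ⟨hdvd, by omega⟩, by omega, hi, hz⟩
        · -- z ≥ m+1 : after one step z-coordinate stays < m+1 ≤ z, contradiction
          exfalso
          obtain ⟨n', rfl⟩ : ∃ n', n = n' + 1 := ⟨n - 1, by omega⟩
          rw [Function.iterate_succ_apply, hT1 m i z hi] at hfix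
          rw [hiter1 m i _ hi (Nat.mod_lt _ (by omega)) n'] at hfix
          have := congrArg (fun q : ℕ × ℕ × ℕ => q.2.2) hfix
          simp only at this
          have hlt := Nat.mod_lt ((z+1) % (m+1) + n') (show 0 < m+1 by omega)
          omega
      · exfalso
        rw [hiter2 m i z n hi] at hfix
        have := congrArg (fun q : ℕ × ℕ × ℕ => q.2.2) hfix
        simp only at this
        omega
    · rintro ⟨d, ⟨hdvd, hn0⟩, hm, hi, hz⟩
      have hd1 : 1 ≤ d := Nat.pos_of_dvd_of_pos hdvd (by omega)
      have hmd : m + 1 = d := by omega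
      subst hm
      rw [hiter1 (d-1) i z (by rwa [show d-1+1 = d by omega]) (by omega) n]
      have : (z + n) % (d-1+1) = z := by
        rw [show d-1+1 = d by omega]
        rcases hdvd with ⟨e, rfl⟩
        rw [Nat.add_mul_mod_self_left, Nat.mod_eq_of_lt hz]
      rw [this]
  refine ⟨by rw [hset]; exact F.finite_toSet, ?_⟩
  rw [hset, Set.ncard_coe_finset]
  have hdisj : ∀ d1 ∈ n.divisors, ∀ d2 ∈ n.divisors, d1 ≠ d2 →
      Disjoint ({d1-1} ×ˢ ((Finset.range (c d1)) ×ˢ (Finset.range d1)))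
        ({d2-1} ×ˢ ((Finset.range (c d2)) ×ˢ (Finset.range d2))) := by
    intro d1 h1 d2 h2 hne
    apply Finset.disjoint_left.mpr
    rintro ⟨m, i, z⟩ hm1 hm2
    simp only [Finset.mem_product, Finset.mem_singleton] at hm1 hm2
    have e1 : 1 ≤ d1 := Nat.pos_of_mem_divisors h1
    have e2 : 1 ≤ d2 := Nat.pos_of_mem_divisors h2
    omega
  rw [hF, Finset.card_biUnion hdisj]
  rw [← hsum n hn]
  apply Finset.sum_congr rfl
  intro d hd
  simp [Finset.card_product]

lemma st_mono {κ : ℕ} : ∀ {m m' : ℕ}, m ≤ m' → stirling2 m (κ+1) ≤ stirling2 m' (κ+1) := by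
  have hstep : ∀ m, stirling2 m (κ+1) ≤ stirling2 (m+1) (κ+1) := by
    intro m
    rw [st_rec]
    nlinarith [stirling2 m (κ+1), stirling2 m κ]
  intro m m' h
  induction m' with
  | zero => interval_cases m; rfl
  | succ m' ih =>
    rcases Nat.eq_or_lt_of_le h with rfl | h'
    · rfl
    · exact le_trans (ih (by omega)) (hstep m')

lemma st_growth {κ : ℕ} (h3 : 3 ≤ κ+1) (m : ℕ) :
    ∀ t, 3^t * stirling2 m (κ+1) ≤ stirling2 (m+t) (κ+1) := by
  intro t
  induction t with
  | zero => simp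
  | succ t ih =>
    have h1 : stirling2 (m+t+1) (κ+1) = (κ+1) * stirling2 (m+t) (κ+1) + stirling2 (m+t) κ :=
      st_rec (m+t) κ
    have h2 : 3 * stirling2 (m+t) (κ+1) ≤ (κ+1) * stirling2 (m+t) (κ+1) :=
      Nat.mul_le_mul_right _ h3
    calc 3^(t+1) * stirling2 m (κ+1) = 3 * (3^t * stirling2 m (κ+1)) := by ring
      _ ≤ 3 * stirling2 (m+t) (κ+1) := by omega
      _ ≤ stirling2 (m + (t+1)) (κ+1) := by rw [show m+(t+1) = m+t+1 by omega]; omega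

lemma moebius_bounds (m : ℕ) :
    -1 ≤ (ArithmeticFunction.moebius m : ℤ) ∧ (ArithmeticFunction.moebius m : ℤ) ≤ 1 := by
  by_cases h : Squarefree m
  · have := ArithmeticFunction.abs_moebius_eq_one_of_squarefree h
    constructor <;> [nlinarith [abs_nonneg (ArithmeticFunction.moebius m), neg_abs_le (ArithmeticFunction.moebius m), le_abs_self (ArithmeticFunction.moebius m)];
      nlinarith [le_abs_self (ArithmeticFunction.moebius m)]]
  · rw [ArithmeticFunction.moebius_eq_zero_of_not_squarefree h]; omega

lemma dold_nonneg {k : ℕ} (hk : 3 ≤ k) {n : ℕ} (hn : 1 ≤ n) :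
    0 ≤ doldSum (fun m => stirling2 (m + k - 1) k) n := by
  obtain ⟨κ, rfl⟩ : ∃ κ, k = κ + 1 := ⟨k - 1, by omega⟩
  rcases Nat.eq_or_lt_of_le hn with rfl | hn2
  · rw [doldSum]
    simp [Nat.divisors_one]
  -- n ≥ 2
  set h : ℕ := n / 2 with hh
  have hh1 : 1 ≤ h := by omega
  set B : ℕ := stirling2 (h + (κ+1) - 1) (κ+1) with hB
  have hbound : ∀ d ∈ n.properDivisors, stirling2 (d + (κ+1) - 1) (κ+1) ≤ B := by
    intro d hd
    rw [Nat.mem_properDivisors] at hd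
    obtain ⟨⟨e, he⟩, hlt⟩ := hd
    have he2 : 2 ≤ e := by
      rcases Nat.lt_or_ge e 2 with h' | h'
      · interval_cases e <;> omega
      · exact h'
    have hdh : d ≤ h := by
      have hde : d * 2 ≤ d * e := Nat.mul_le_mul_left d he2
      rw [hh]
      omega
    exact st_mono (by omega)
  have hcard : n.properDivisors.card ≤ h := by
    have hsub : n.properDivisors ⊆ Finset.Icc 1 h := by
      intro d hd
      rw [Nat.mem_properDivisors] at hd
      obtain ⟨⟨e, he⟩, hlt⟩ := hd
      have hd1 : 1 ≤ d := by
        rcases Nat.eq_zero_or_pos d with rfl | h' ; · omega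
        · exact h'
      have he2 : 2 ≤ e := by
        rcases Nat.lt_or_ge e 2 with h' | h'
        · interval_cases e <;> omega
        · exact h'
      have hde : d * 2 ≤ d * e := Nat.mul_le_mul_left d he2
      rw [Finset.mem_Icc]
      constructor
      · exact hd1
      · omega
    calc n.properDivisors.card ≤ (Finset.Icc 1 h).card := Finset.card_le_card hsub
      _ = h := by rw [Nat.card_Icc]; omega
  have hgrow : (h + 1) * B ≤ stirling2 (n + (κ+1) - 1) (κ+1) := by
    have hg := st_growth hk (h + (κ+1) - 1) (n - h)
    have hidx : h + (κ+1) - 1 + (n - h) = n + (κ+1) - 1 := by omega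
    rw [hidx] at hg
    have hpow : (n - h) + 1 ≤ 3^(n-h) := (Nat.lt_pow_self (by norm_num : 1 < 3) : n - h < 3^(n-h))
    have hhle : h ≤ n - h := by omega
    calc (h+1) * B ≤ 3^(n-h) * B := Nat.mul_le_mul_right _ (by omega)
      _ ≤ _ := hg
  -- now integer estimates
  rw [doldSum, ← Nat.insert_self_properDivisors (show n ≠ 0 by omega), Finset.sum_insert
      (fun hmem => by have := (Nat.mem_properDivisors.mp hmem).2; omega)]
  rw [Nat.div_self (show 0 < n by omega), ArithmeticFunction.moebius_apply_one]
  have hstep : ∀ d ∈ n.properDivisors,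
      -(B:ℤ) ≤ (ArithmeticFunction.moebius (n/d) : ℤ) * (stirling2 (d + (κ+1) - 1) (κ+1) : ℤ) := by
    intro d hd
    obtain ⟨hm1, hm2⟩ := moebius_bounds (n/d)
    have hb := hbound d hd
    have h0 : (0:ℤ) ≤ (stirling2 (d + (κ+1) - 1) (κ+1) : ℤ) := Int.natCast_nonneg _
    nlinarith [show ((stirling2 (d + (κ+1) - 1) (κ+1) : ℕ) : ℤ) ≤ (B:ℤ) from by exact_mod_cast hb]
  have hsum_ge : -((n.properDivisors.card : ℤ) * B) ≤
      ∑ d ∈ n.properDivisors, (ArithmeticFunction.moebius (n/d) : ℤ) * (stirling2 (d + (κ+1) - 1) (κ+1) : ℤ) := by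
    calc -((n.properDivisors.card : ℤ) * B) = ∑ _d ∈ n.properDivisors, -(B:ℤ) := by
          rw [Finset.sum_const, nsmul_eq_mul]; ring
      _ ≤ _ := Finset.sum_le_sum hstep
  have hA : ((h:ℤ) + 1) * B ≤ (stirling2 (n + (κ+1) - 1) (κ+1) : ℤ) := by exact_mod_cast hgrow
  have hcard' : ((n.properDivisors.card : ℤ)) ≤ h := by exact_mod_cast hcard
  have hBpos : (0:ℤ) ≤ B := Int.natCast_nonneg _
  simp only [one_mul]
  have := hsum_ge
  nlinarith [hsum_ge, hA, hcard', hBpos]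

lemma exists_mid_prime {k : ℕ} (hk : 3 ≤ k) : ∃ p, p.Prime ∧ p < k ∧ k < 2*p := by
  obtain ⟨p, pp, h1, h2⟩ := Nat.exists_prime_lt_and_le_two_mul (k/2) (by omega)
  refine ⟨p, pp, ?_, by omega⟩
  rcases Nat.lt_or_ge p k with h | h
  · exact h
  · exfalso
    have hpk : p = k := by omega
    subst hpk
    have h3 : p % 2 = 0 := by omega
    have h4 : p = 2 := (Nat.Prime.even_iff pp).mp (Nat.even_iff.mpr h3)
    omega

theorem stirling2_large_k (k : ℕ) (hk : 3 ≤ k) :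
    ¬ IsRealizable (fun n => stirling2 (n + k - 1) k) ∧
    IsRealizable (fun n => Nat.factorial (k - 1) * stirling2 (n + k - 1) k) := by
  constructor
  · -- non-realizability
    intro hreal
    obtain ⟨p, pp, hpk, hkp⟩ := exists_mid_prime hk
    haveI : Fact p.Prime := ⟨pp⟩
    have hd := (dold_of_realizable hreal (show 1 ≤ p from pp.pos)).1
    have hds : doldSum (fun n => stirling2 (n + k - 1) k) p
        = (stirling2 (p + k - 1) k : ℤ) - 1 := by
      rw [doldSum, Nat.Prime.divisors pp, Finset.sum_pair pp.one_lt.ne,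
        Nat.div_one, Nat.div_self pp.pos, ArithmeticFunction.moebius_apply_one,
        ArithmeticFunction.moebius_apply_prime pp]
      simp only [show (1:ℕ) + k - 1 = k by omega, st_self]
      push_cast
      ring
    rw [hds] at hd
    have h0 := (ZMod.intCast_zmod_eq_zero_iff_dvd _ p).mpr hd
    push_cast at h0
    rw [st_two_mod hpk hkp] at h0
    have h1 : (1 : ZMod p) = 0 := by
      have h2 : (2 - 1 : ZMod p) = 1 := by norm_num
      rw [h2] at h0
      exact h0
    exact one_ne_zero h1
  · -- realizability of the multiple
    apply realizable_of_dold
    intro n hn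
    obtain ⟨κ, rfl⟩ : ∃ κ, k = κ + 2 := ⟨k - 2, by omega⟩
    constructor
    · -- divisibility
      have hbd : ∀ d : ℕ,
          ((Nat.factorial (κ+2-1) * stirling2 (d + (κ+2) - 1) (κ+2) : ℕ) : ℤ)
          = ∑ j ∈ Finset.range (κ+2),
              ((-1:ℤ)^(κ+1+j) * ((κ+1).choose j) * ((j:ℤ)+1)^κ) * ((j:ℤ)+1)^d := by
        intro d
        have hid := st_ident (d+κ) (κ+1)
        rw [show d+κ+1 = d+(κ+2)-1 by omega] at hid
        simp only [show κ+2-1 = κ+1 from rfl]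
        push_cast
        rw [hid]
        apply Finset.sum_congr rfl
        intro j hj
        rw [show d + κ = κ + d by omega, pow_add]
        ring
      simp only [doldSum]
      have h1 : ∀ d ∈ n.divisors,
          (ArithmeticFunction.moebius (n/d) : ℤ) *
            ((Nat.factorial (κ+2-1) * stirling2 (d + (κ+2) - 1) (κ+2) : ℕ) : ℤ)
          = ∑ j ∈ Finset.range (κ+2),
              ((-1:ℤ)^(κ+1+j) * ((κ+1).choose j) * ((j:ℤ)+1)^κ) *
                ((ArithmeticFunction.moebius (n/d) : ℤ) * ((j:ℤ)+1)^d) := by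
        intro d _
        rw [hbd d, Finset.mul_sum]
        apply Finset.sum_congr rfl
        intro j _
        ring
      rw [Finset.sum_congr rfl h1, Finset.sum_comm]
      apply Finset.dvd_sum
      intro j _
      rw [← Finset.mul_sum]
      exact Dvd.dvd.mul_left (gauss_dvd j n hn) _
    · -- nonnegativity
      have heq : doldSum (fun m => Nat.factorial (κ+2-1) * stirling2 (m + (κ+2) - 1) (κ+2)) n
          = ((κ+1).factorial : ℤ) * doldSum (fun m => stirling2 (m + (κ+2) - 1) (κ+2)) n := by
        simp only [doldSum, Finset.mul_sum]
        apply Finset.sum_congr rfl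
        intro d _
        push_cast [show κ+2-1 = κ+1 from rfl]
        ring
      rw [heq]
      exact mul_nonneg (Int.natCast_nonneg _) (dold_nonneg (by omega) hn)
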